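/- If ψ achieves ⟨ψ|B̄|ψ⟩ = −Nk, then for every party i and setting a, [Z̄^{(i)} cos(aπ/k) + X̄^{(i)} sin(aπ/k)] ψ = σ̄_a^{(i)} ψ, i.e., the measurements act on ψ as equally-spaced measurements in a plane. -/

import Mathlib

open Real

private lemma sum_exp_eq_zero (k : ℕ) (hk : 2 ≤ k) :
    ∑ a : Fin k, Complex.exp (((2 * π * (a : ℝ) / k : ℝ)) * Complex.I) = 0 := by
  have hne : (k : ℕ) ≠ 0 := by omega
  have hprim := Complex.isPrimitiveRoot_exp k hne
  have hgs := hprim.geom_sum_eq_zero (by omega : 1 < k)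
  rw [Fin.sum_univ_eq_sum_range (fun a => Complex.exp (((2 * π * (a : ℝ) / k : ℝ)) * Complex.I))]
  rw [← hgs]
  refine Finset.sum_congr rfl fun a _ => ?_
  rw [← Complex.exp_nat_mul]
  congr 1
  have : (k : ℂ) ≠ 0 := by exact_mod_cast Nat.cast_ne_zero.mpr hne
  push_cast
  ring

private lemma sum_cos_two (k : ℕ) (hk : 2 ≤ k) :
    ∑ a : Fin k, Real.cos (2 * π * (a : ℝ) / k) = 0 := by
  have h := congrArg Complex.re (sum_exp_eq_zero k hk)
  rw [Complex.re_sum] at h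
  rw [Finset.sum_congr rfl fun a _ => (Complex.exp_ofReal_mul_I_re _).symm]
  simpa using h

private lemma sum_sin_two (k : ℕ) (hk : 2 ≤ k) :
    ∑ a : Fin k, Real.sin (2 * π * (a : ℝ) / k) = 0 := by
  have h := congrArg Complex.im (sum_exp_eq_zero k hk)
  rw [Complex.im_sum] at h
  rw [Finset.sum_congr rfl fun a _ => (Complex.exp_ofReal_mul_I_im _).symm]
  simpa using h

private lemma sum_cos_sq' (k : ℕ) (hk : 2 ≤ k) :
    ∑ a : Fin k, Real.cos ((a : ℝ) * π / k) ^ 2 = k / 2 := by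
  have h : ∀ a : Fin k, Real.cos ((a : ℝ) * π / k) ^ 2
      = 1 / 2 + Real.cos (2 * π * (a : ℝ) / k) / 2 := by
    intro a
    rw [Real.cos_sq]
    congr 2
    ring
  rw [Finset.sum_congr rfl fun a _ => h a, Finset.sum_add_distrib,
    Finset.sum_congr rfl (fun a _ => div_eq_mul_inv (Real.cos _) 2), ← Finset.sum_mul,
    sum_cos_two k hk]
  simp
  ring

private lemma sum_sin_sq' (k : ℕ) (hk : 2 ≤ k) :
    ∑ a : Fin k, Real.sin ((a : ℝ) * π / k) ^ 2 = k / 2 := by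
  have h : ∀ a : Fin k, Real.sin ((a : ℝ) * π / k) ^ 2
      = 1 - Real.cos ((a : ℝ) * π / k) ^ 2 := by
    intro a; rw [Real.sin_sq]
  rw [Finset.sum_congr rfl fun a _ => h a, Finset.sum_sub_distrib, sum_cos_sq' k hk]
  simp
  ring

private lemma sum_cos_sin' (k : ℕ) (hk : 2 ≤ k) :
    ∑ a : Fin k, Real.cos ((a : ℝ) * π / k) * Real.sin ((a : ℝ) * π / k) = 0 := by
  have h : ∀ a : Fin k, Real.cos ((a : ℝ) * π / k) * Real.sin ((a : ℝ) * π / k)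
      = Real.sin (2 * π * (a : ℝ) / k) / 2 := by
    intro a
    rw [show 2 * π * (a : ℝ) / k = 2 * ((a : ℝ) * π / k) by ring, Real.sin_two_mul]
    ring
  rw [Finset.sum_congr rfl fun a _ => h a,
    Finset.sum_congr rfl (fun a _ => div_eq_mul_inv (Real.sin _) 2), ← Finset.sum_mul,
    sum_sin_two k hk]
  simp

private lemma sum_swap3 {M α β γ : Type*} [AddCommMonoid M] [Fintype α] [Fintype β] [Fintype γ]
    (F : α → β → γ → M) :
    ∑ a, ∑ b, ∑ i, F a b i = ∑ i, ∑ a, ∑ b, F a b i :=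
  (Finset.sum_congr rfl fun _ _ => Finset.sum_comm).trans Finset.sum_comm

private lemma sum_swap4 {M α β γ δ : Type*} [AddCommMonoid M] [Fintype α] [Fintype β] [Fintype γ]
    [Fintype δ] (F : α → β → γ → δ → M) :
    ∑ a, ∑ b, ∑ i, ∑ j, F a b i j = ∑ i, ∑ j, ∑ a, ∑ b, F a b i j :=
  (sum_swap3 _).trans (Finset.sum_congr rfl fun _ _ => sum_swap3 _)

private lemma sos_identity {A : Type*} [Ring A] [Algebra ℂ A] {k N : ℕ}
    (hk0 : (k : ℂ) ≠ 0)
    (c s : Fin k → ℂ)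
    (hcc : ∑ a : Fin k, c a * c a = (k : ℂ) / 2)
    (hss : ∑ a : Fin k, s a * s a = (k : ℂ) / 2)
    (hcs : ∑ a : Fin k, c a * s a = 0)
    (hsc : ∑ a : Fin k, s a * c a = 0)
    (σ : Fin N → Fin k → A) (hsq : ∀ i a, σ i a * σ i a = 1)
    (Z X : Fin N → A)
    (hZ : ∀ i, ∑ a : Fin k, c a • σ i a = ((k : ℂ) / 2) • Z i)
    (hX : ∀ i, ∑ a : Fin k, s a • σ i a = ((k : ℂ) / 2) • X i) :
    (∑ a : Fin k, ∑ b : Fin k, ((2 / (k : ℂ)) * (c a * c b + s a * s b)) •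
        ∑ i : Fin N, ∑ j : Fin N, (if i ≠ j then σ i a * σ j b else 0))
      + ((N : ℂ) * (k : ℂ)) • (1 : A)
    = ((k : ℂ) / 2) • ((∑ i, Z i) * (∑ i, Z i) + (∑ i, X i) * (∑ i, X i))
      + ∑ i : Fin N, ∑ a : Fin k,
          (c a • Z i + s a • X i - σ i a) * (c a • Z i + s a • X i - σ i a) := by
  have hcoef : (2 / (k : ℂ)) * (((k : ℂ) / 2) * ((k : ℂ) / 2)) = (k : ℂ) / 2 := by
    field_simp
  have D1 : ∀ i j, ∑ a : Fin k, ∑ b : Fin k,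
      ((2 / (k : ℂ)) * (c a * c b + s a * s b)) • (σ i a * σ j b)
      = ((k : ℂ) / 2) • (Z i * Z j + X i * X j) := by
    intro i j
    have e1 : ∑ a : Fin k, ∑ b : Fin k, (c a * c b) • (σ i a * σ j b)
        = (∑ a : Fin k, c a • σ i a) * (∑ b : Fin k, c b • σ j b) := by
      rw [Finset.sum_mul]
      refine Finset.sum_congr rfl fun a _ => ?_
      rw [Finset.mul_sum]
      exact Finset.sum_congr rfl fun b _ => (smul_mul_smul_comm _ _ _ _).symm
    have e2 : ∑ a : Fin k, ∑ b : Fin k, (s a * s b) • (σ i a * σ j b)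
        = (∑ a : Fin k, s a • σ i a) * (∑ b : Fin k, s b • σ j b) := by
      rw [Finset.sum_mul]
      refine Finset.sum_congr rfl fun a _ => ?_
      rw [Finset.mul_sum]
      exact Finset.sum_congr rfl fun b _ => (smul_mul_smul_comm _ _ _ _).symm
    have expand : ∀ (u v : ℂ) (x : A), ((2 / (k : ℂ)) * (u + v)) • x
        = (2 / (k : ℂ)) • (u • x) + (2 / (k : ℂ)) • (v • x) := by
      intro u v x; rw [mul_add, add_smul, mul_smul, mul_smul]
    calc ∑ a : Fin k, ∑ b : Fin k, ((2 / (k : ℂ)) * (c a * c b + s a * s b)) • (σ i a * σ j b)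
        = ∑ a : Fin k, ∑ b : Fin k, ((2 / (k : ℂ)) • ((c a * c b) • (σ i a * σ j b))
            + (2 / (k : ℂ)) • ((s a * s b) • (σ i a * σ j b))) :=
          Finset.sum_congr rfl fun a _ => Finset.sum_congr rfl fun b _ => expand _ _ _
      _ = (2 / (k : ℂ)) • ((∑ a : Fin k, ∑ b : Fin k, (c a * c b) • (σ i a * σ j b))
            + (∑ a : Fin k, ∑ b : Fin k, (s a * s b) • (σ i a * σ j b))) := by
          simp only [Finset.sum_add_distrib, ← Finset.smul_sum, smul_add]
      _ = ((k : ℂ) / 2) • (Z i * Z j + X i * X j) := by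
          rw [e1, e2, hZ i, hZ j, hX i, hX j]
          simp only [smul_mul_smul_comm, smul_add, smul_smul]
          rw [hcoef]
  have D2 : ∀ (f : Fin N → Fin N → A),
      (∑ i : Fin N, ∑ j : Fin N, if i ≠ j then f i j else 0)
        = (∑ i : Fin N, ∑ j : Fin N, f i j) - ∑ i : Fin N, f i i := by
    intro f
    rw [← Finset.sum_sub_distrib]
    refine Finset.sum_congr rfl fun i _ => ?_
    have h : ∀ j, (if i ≠ j then f i j else 0) = f i j - (if i = j then f i j else 0) := by
      intro j; by_cases h : i = j <;> simp [h]
    rw [Finset.sum_congr rfl fun j _ => h j, Finset.sum_sub_distrib, Finset.sum_ite_eq]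
    simp
  have hBsplit : (∑ a : Fin k, ∑ b : Fin k, ((2 / (k : ℂ)) * (c a * c b + s a * s b)) •
        ∑ i : Fin N, ∑ j : Fin N, (if i ≠ j then σ i a * σ j b else 0))
      = ((k : ℂ) / 2) • ((∑ i, Z i) * (∑ i, Z i) + (∑ i, X i) * (∑ i, X i))
        - ∑ i : Fin N, ((k : ℂ) / 2) • (Z i * Z i + X i * X i) := by
    have h1 : ∀ a b : Fin k, ((2 / (k : ℂ)) * (c a * c b + s a * s b)) •
          (∑ i : Fin N, ∑ j : Fin N, (if i ≠ j then σ i a * σ j b else 0))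
        = (∑ i : Fin N, ∑ j : Fin N,
              ((2 / (k : ℂ)) * (c a * c b + s a * s b)) • (σ i a * σ j b))
          - ∑ i : Fin N, ((2 / (k : ℂ)) * (c a * c b + s a * s b)) • (σ i a * σ i b) := by
      intro a b
      rw [D2, smul_sub]
      simp only [Finset.smul_sum]
    rw [Finset.sum_congr rfl fun a _ => Finset.sum_congr rfl fun b _ => h1 a b]
    simp only [Finset.sum_sub_distrib]
    have hfirst : ∑ a : Fin k, ∑ b : Fin k, ∑ i : Fin N, ∑ j : Fin N,
          ((2 / (k : ℂ)) * (c a * c b + s a * s b)) • (σ i a * σ j b)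
        = ((k : ℂ) / 2) • ((∑ i, Z i) * (∑ i, Z i) + (∑ i, X i) * (∑ i, X i)) := by
      rw [sum_swap4]
      rw [Finset.sum_congr rfl fun i _ => Finset.sum_congr rfl fun j _ => D1 i j]
      have hZZ : ((k : ℂ) / 2) • ((∑ i, Z i) * (∑ i, Z i))
          = ∑ i : Fin N, ∑ j : Fin N, ((k : ℂ) / 2) • (Z i * Z j) := by
        rw [Finset.sum_mul_sum, Finset.smul_sum]
        exact Finset.sum_congr rfl fun i _ => Finset.smul_sum
      have hXX : ((k : ℂ) / 2) • ((∑ i, X i) * (∑ i, X i))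
          = ∑ i : Fin N, ∑ j : Fin N, ((k : ℂ) / 2) • (X i * X j) := by
        rw [Finset.sum_mul_sum, Finset.smul_sum]
        exact Finset.sum_congr rfl fun i _ => Finset.smul_sum
      rw [smul_add, hZZ, hXX, ← Finset.sum_add_distrib]
      refine Finset.sum_congr rfl fun i _ => ?_
      rw [← Finset.sum_add_distrib]
      exact Finset.sum_congr rfl fun j _ => smul_add _ _ _
    have hsecond : ∑ a : Fin k, ∑ b : Fin k, ∑ i : Fin N,
          ((2 / (k : ℂ)) * (c a * c b + s a * s b)) • (σ i a * σ i b)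
        = ∑ i : Fin N, ((k : ℂ) / 2) • (Z i * Z i + X i * X i) := by
      rw [sum_swap3]
      exact Finset.sum_congr rfl fun i _ => D1 i i
    rw [hfirst, hsecond]
  have D4 : ∀ i, ∑ a : Fin k, (c a • Z i + s a • X i - σ i a) * (c a • Z i + s a • X i - σ i a)
      = (k : ℂ) • (1 : A) - ((k : ℂ) / 2) • (Z i * Z i + X i * X i) := by
    intro i
    have expand : ∀ a : Fin k, (c a • Z i + s a • X i - σ i a) * (c a • Z i + s a • X i - σ i a)
        = (c a * c a) • (Z i * Z i) + (c a * s a) • (Z i * X i)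
          + (s a * c a) • (X i * Z i) + (s a * s a) • (X i * X i)
          - c a • (Z i * σ i a) - c a • (σ i a * Z i)
          - s a • (X i * σ i a) - s a • (σ i a * X i) + (1 : A) := by
      intro a
      rw [show (1 : A) = σ i a * σ i a from (hsq i a).symm]
      simp only [sub_mul, mul_sub, add_mul, mul_add, smul_mul_smul_comm, smul_mul_assoc,
        mul_smul_comm]
      module
    rw [Finset.sum_congr rfl fun a _ => expand a]
    simp only [Finset.sum_add_distrib, Finset.sum_sub_distrib]
    rw [← Finset.sum_smul, ← Finset.sum_smul, ← Finset.sum_smul, ← Finset.sum_smul,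
      hcc, hss, hcs, hsc]
    have t1 : ∑ a : Fin k, c a • (Z i * σ i a) = ((k : ℂ) / 2) • (Z i * Z i) := by
      calc ∑ a : Fin k, c a • (Z i * σ i a) = Z i * ∑ a : Fin k, c a • σ i a := by
            rw [Finset.mul_sum]
            exact Finset.sum_congr rfl fun a _ => (mul_smul_comm _ _ _).symm
        _ = _ := by rw [hZ i, mul_smul_comm]
    have t2 : ∑ a : Fin k, c a • (σ i a * Z i) = ((k : ℂ) / 2) • (Z i * Z i) := by
      calc ∑ a : Fin k, c a • (σ i a * Z i) = (∑ a : Fin k, c a • σ i a) * Z i := by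
            rw [Finset.sum_mul]
            exact Finset.sum_congr rfl fun a _ => (smul_mul_assoc _ _ _).symm
        _ = _ := by rw [hZ i, smul_mul_assoc]
    have t3 : ∑ a : Fin k, s a • (X i * σ i a) = ((k : ℂ) / 2) • (X i * X i) := by
      calc ∑ a : Fin k, s a • (X i * σ i a) = X i * ∑ a : Fin k, s a • σ i a := by
            rw [Finset.mul_sum]
            exact Finset.sum_congr rfl fun a _ => (mul_smul_comm _ _ _).symm
        _ = _ := by rw [hX i, mul_smul_comm]
    have t4 : ∑ a : Fin k, s a • (σ i a * X i) = ((k : ℂ) / 2) • (X i * X i) := by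
      calc ∑ a : Fin k, s a • (σ i a * X i) = (∑ a : Fin k, s a • σ i a) * X i := by
            rw [Finset.sum_mul]
            exact Finset.sum_congr rfl fun a _ => (smul_mul_assoc _ _ _).symm
        _ = _ := by rw [hX i, smul_mul_assoc]
    have t5 : ∑ _a : Fin k, (1 : A) = (k : ℂ) • (1 : A) := by
      rw [Finset.sum_const, Finset.card_univ, Fintype.card_fin, Nat.cast_smul_eq_nsmul]
    rw [t1, t2, t3, t4, t5]
    module
  rw [hBsplit, Finset.sum_congr rfl fun i (_ : i ∈ Finset.univ) => D4 i,
    Finset.sum_sub_distrib, Finset.sum_const, Finset.card_univ, Fintype.card_fin,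
    ← Nat.cast_smul_eq_nsmul ℂ N ((k : ℂ) • (1 : A)), smul_smul]
  module

private lemma inner_sq_norm {H : Type*} [NormedAddCommGroup H] [InnerProductSpace ℂ H]
    [CompleteSpace H] (T : H →L[ℂ] H) (hT : IsSelfAdjoint T) (ψ : H) :
    (inner ℂ ψ ((T * T) ψ) : ℂ) = (‖T ψ‖ : ℂ) ^ 2 := by
  rw [ContinuousLinearMap.mul_apply, ← ContinuousLinearMap.adjoint_inner_left,
    ContinuousLinearMap.isSelfAdjoint_iff'.mp hT, inner_self_eq_norm_sq_to_K]
  norm_num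

private lemma ofReal_isSelfAdjoint (x : ℝ) : IsSelfAdjoint ((x : ℝ) : ℂ) := by
  show star _ = _
  rw [Complex.star_def, Complex.conj_ofReal]

set_option maxHeartbeats 1000000 in
/-- If a unit vector `ψ` attains the quantum bound `⟨ψ, B̄ ψ⟩ = -Nk`, then for every
party `i` and setting `a`, `[Z̄⁽ⁱ⁾ cos(aπ/k) + X̄⁽ⁱ⁾ sin(aπ/k)] ψ = σ̄_a⁽ⁱ⁾ ψ`:
the measurements act on `ψ` as equally-spaced measurements in a plane. -/
theorem max_violation_measurements_in_plane (N k : ℕ) (hN : 2 ≤ N) (hk : 3 ≤ k)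
    (H : Type*) [NormedAddCommGroup H] [InnerProductSpace ℂ H] [CompleteSpace H]
    (σ : Fin N → Fin k → (H →L[ℂ] H))
    (hsa : ∀ i a, IsSelfAdjoint (σ i a))
    (hsq : ∀ i a, σ i a * σ i a = 1)
    (hcomm : ∀ i j a b, i ≠ j → Commute (σ i a) (σ j b))
    (Bop : H →L[ℂ] H)
    (hBop : Bop = ∑ a : Fin k, ∑ b : Fin k,
        (((2 / (k : ℝ)) * Real.cos (π * ((a : ℝ) - (b : ℝ)) / k) : ℝ) : ℂ) •
          ∑ i : Fin N, ∑ j : Fin N, if i ≠ j then σ i a * σ j b else 0)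
    (Z X : Fin N → (H →L[ℂ] H))
    (hZ : ∀ i, Z i = (((2 / (k : ℝ)) : ℝ) : ℂ) •
        ∑ a : Fin k, ((Real.cos ((a : ℝ) * π / k) : ℝ) : ℂ) • σ i a)
    (hX : ∀ i, X i = (((2 / (k : ℝ)) : ℝ) : ℂ) •
        ∑ a : Fin k, ((Real.sin ((a : ℝ) * π / k) : ℝ) : ℂ) • σ i a)
    (ψ : H) (hψ : ‖ψ‖ = 1)
    (hmax : (inner ℂ ψ (Bop ψ) : ℂ) = -(((N : ℝ) * k : ℝ) : ℂ)) :
    ∀ (i : Fin N) (a : Fin k),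
      (((Real.cos ((a : ℝ) * π / k) : ℝ) : ℂ) • Z i
        + ((Real.sin ((a : ℝ) * π / k) : ℝ) : ℂ) • X i) ψ = (σ i a) ψ := by
  have hk2 : 2 ≤ k := by omega
  have hkC : (k : ℂ) ≠ 0 := Nat.cast_ne_zero.mpr (by omega)
  -- reformulated definitions of Z and X
  have hZ' : ∀ i, ∑ a : Fin k, ((Real.cos ((a : ℝ) * π / k) : ℝ) : ℂ) • σ i a
      = ((k : ℂ) / 2) • Z i := by
    intro i
    rw [hZ i, smul_smul,
      show ((k : ℂ) / 2) * (((2 / (k : ℝ) : ℝ)) : ℂ) = 1 by push_cast; field_simp, one_smul]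
  have hX' : ∀ i, ∑ a : Fin k, ((Real.sin ((a : ℝ) * π / k) : ℝ) : ℂ) • σ i a
      = ((k : ℂ) / 2) • X i := by
    intro i
    rw [hX i, smul_smul,
      show ((k : ℂ) / 2) * (((2 / (k : ℝ) : ℝ)) : ℂ) = 1 by push_cast; field_simp, one_smul]
  -- trigonometric sums, complexified
  have hcc : ∑ a : Fin k, ((Real.cos ((a : ℝ) * π / k) : ℝ) : ℂ)
        * ((Real.cos ((a : ℝ) * π / k) : ℝ) : ℂ) = (k : ℂ) / 2 := by
    calc ∑ a : Fin k, ((Real.cos ((a : ℝ) * π / k) : ℝ) : ℂ)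
          * ((Real.cos ((a : ℝ) * π / k) : ℝ) : ℂ)
        = ∑ a : Fin k, ((Real.cos ((a : ℝ) * π / k) ^ 2 : ℝ) : ℂ) :=
          Finset.sum_congr rfl fun a _ => by rw [Complex.ofReal_pow]; ring
      _ = ((∑ a : Fin k, Real.cos ((a : ℝ) * π / k) ^ 2 : ℝ) : ℂ) :=
          (Complex.ofReal_sum _ _).symm
      _ = (((k : ℝ) / 2 : ℝ) : ℂ) := by rw [sum_cos_sq' k hk2]
      _ = (k : ℂ) / 2 := by push_cast; ring
  have hss : ∑ a : Fin k, ((Real.sin ((a : ℝ) * π / k) : ℝ) : ℂ)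
        * ((Real.sin ((a : ℝ) * π / k) : ℝ) : ℂ) = (k : ℂ) / 2 := by
    calc ∑ a : Fin k, ((Real.sin ((a : ℝ) * π / k) : ℝ) : ℂ)
          * ((Real.sin ((a : ℝ) * π / k) : ℝ) : ℂ)
        = ∑ a : Fin k, ((Real.sin ((a : ℝ) * π / k) ^ 2 : ℝ) : ℂ) :=
          Finset.sum_congr rfl fun a _ => by rw [Complex.ofReal_pow]; ring
      _ = ((∑ a : Fin k, Real.sin ((a : ℝ) * π / k) ^ 2 : ℝ) : ℂ) :=
          (Complex.ofReal_sum _ _).symm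
      _ = (((k : ℝ) / 2 : ℝ) : ℂ) := by rw [sum_sin_sq' k hk2]
      _ = (k : ℂ) / 2 := by push_cast; ring
  have hcs : ∑ a : Fin k, ((Real.cos ((a : ℝ) * π / k) : ℝ) : ℂ)
        * ((Real.sin ((a : ℝ) * π / k) : ℝ) : ℂ) = 0 := by
    calc ∑ a : Fin k, ((Real.cos ((a : ℝ) * π / k) : ℝ) : ℂ)
          * ((Real.sin ((a : ℝ) * π / k) : ℝ) : ℂ)
        = ∑ a : Fin k, ((Real.cos ((a : ℝ) * π / k) * Real.sin ((a : ℝ) * π / k) : ℝ) : ℂ) :=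
          Finset.sum_congr rfl fun a _ => by rw [Complex.ofReal_mul]
      _ = ((∑ a : Fin k, Real.cos ((a : ℝ) * π / k) * Real.sin ((a : ℝ) * π / k) : ℝ) : ℂ) :=
          (Complex.ofReal_sum _ _).symm
      _ = 0 := by rw [sum_cos_sin' k hk2, Complex.ofReal_zero]
  have hsc : ∑ a : Fin k, ((Real.sin ((a : ℝ) * π / k) : ℝ) : ℂ)
        * ((Real.cos ((a : ℝ) * π / k) : ℝ) : ℂ) = 0 := by
    rw [← hcs]
    exact Finset.sum_congr rfl fun a _ => mul_comm _ _
  -- rewrite the Bell operator coefficients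
  have hBop' : Bop = ∑ a : Fin k, ∑ b : Fin k,
      ((2 / (k : ℂ)) * (((Real.cos ((a : ℝ) * π / k) : ℝ) : ℂ)
          * ((Real.cos ((b : ℝ) * π / k) : ℝ) : ℂ)
        + ((Real.sin ((a : ℝ) * π / k) : ℝ) : ℂ)
          * ((Real.sin ((b : ℝ) * π / k) : ℝ) : ℂ))) •
        ∑ i : Fin N, ∑ j : Fin N, (if i ≠ j then σ i a * σ j b else 0) := by
    rw [hBop]
    refine Finset.sum_congr rfl fun a _ => Finset.sum_congr rfl fun b _ => ?_
    congr 1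
    rw [show π * ((a : ℝ) - (b : ℝ)) / k = (a : ℝ) * π / k - (b : ℝ) * π / k by ring,
      Real.cos_sub]
    push_cast
    ring
  -- the sum-of-squares identity
  have hop' : Bop + ((N : ℂ) * (k : ℂ)) • (1 : H →L[ℂ] H)
      = ((k : ℂ) / 2) • ((∑ i, Z i) * (∑ i, Z i) + (∑ i, X i) * (∑ i, X i))
        + ∑ i : Fin N, ∑ a : Fin k,
            (((Real.cos ((a : ℝ) * π / k) : ℝ) : ℂ) • Z i
              + ((Real.sin ((a : ℝ) * π / k) : ℝ) : ℂ) • X i - σ i a)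
            * (((Real.cos ((a : ℝ) * π / k) : ℝ) : ℂ) • Z i
              + ((Real.sin ((a : ℝ) * π / k) : ℝ) : ℂ) • X i - σ i a) := by
    rw [hBop']
    exact sos_identity hkC
      (fun a => ((Real.cos ((a : ℝ) * π / k) : ℝ) : ℂ))
      (fun a => ((Real.sin ((a : ℝ) * π / k) : ℝ) : ℂ))
      hcc hss hcs hsc σ hsq Z X hZ' hX'
  -- self-adjointness
  have hsaZ : ∀ i, IsSelfAdjoint (Z i) := by
    intro i
    rw [hZ i]
    refine IsSelfAdjoint.smul (ofReal_isSelfAdjoint _) ?_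
    show star _ = _
    rw [star_sum]
    exact Finset.sum_congr rfl fun a _ => by
      rw [star_smul, Complex.star_def, Complex.conj_ofReal, (hsa i a).star_eq]
  have hsaX : ∀ i, IsSelfAdjoint (X i) := by
    intro i
    rw [hX i]
    refine IsSelfAdjoint.smul (ofReal_isSelfAdjoint _) ?_
    show star _ = _
    rw [star_sum]
    exact Finset.sum_congr rfl fun a _ => by
      rw [star_smul, Complex.star_def, Complex.conj_ofReal, (hsa i a).star_eq]
  have hsaZt : IsSelfAdjoint (∑ i, Z i) := by
    show star _ = _
    rw [star_sum]
    exact Finset.sum_congr rfl fun i _ => (hsaZ i).star_eq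
  have hsaXt : IsSelfAdjoint (∑ i, X i) := by
    show star _ = _
    rw [star_sum]
    exact Finset.sum_congr rfl fun i _ => (hsaX i).star_eq
  have hsaM : ∀ (i : Fin N) (a : Fin k),
      IsSelfAdjoint (((Real.cos ((a : ℝ) * π / k) : ℝ) : ℂ) • Z i
        + ((Real.sin ((a : ℝ) * π / k) : ℝ) : ℂ) • X i - σ i a) := fun i a =>
    ((IsSelfAdjoint.smul (ofReal_isSelfAdjoint _) (hsaZ i)).add
      (IsSelfAdjoint.smul (ofReal_isSelfAdjoint _) (hsaX i))).sub (hsa i a)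
  -- evaluate the quadratic form at ψ
  have hinner1 : (inner ℂ ψ ψ : ℂ) = 1 := by
    rw [inner_self_eq_norm_sq_to_K, hψ]; norm_num
  have hLHS : (inner ℂ ψ ((Bop + ((N : ℂ) * (k : ℂ)) • (1 : H →L[ℂ] H)) ψ) : ℂ) = 0 := by
    rw [ContinuousLinearMap.add_apply, inner_add_right, hmax, ContinuousLinearMap.smul_apply,
      ContinuousLinearMap.one_apply, inner_smul_right, hinner1]
    push_cast
    ring
  have hRHS : (inner ℂ ψ ((Bop + ((N : ℂ) * (k : ℂ)) • (1 : H →L[ℂ] H)) ψ) : ℂ)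
      = ((k : ℂ) / 2) * ((‖(∑ i, Z i) ψ‖ : ℂ) ^ 2 + (‖(∑ i, X i) ψ‖ : ℂ) ^ 2)
        + ∑ i : Fin N, ∑ a : Fin k,
            (‖(((Real.cos ((a : ℝ) * π / k) : ℝ) : ℂ) • Z i
              + ((Real.sin ((a : ℝ) * π / k) : ℝ) : ℂ) • X i - σ i a) ψ‖ : ℂ) ^ 2 := by
    rw [hop', ContinuousLinearMap.add_apply, inner_add_right]
    congr 1
    · rw [ContinuousLinearMap.smul_apply, inner_smul_right, ContinuousLinearMap.add_apply,
        inner_add_right, inner_sq_norm _ hsaZt ψ, inner_sq_norm _ hsaXt ψ]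
    · rw [ContinuousLinearMap.sum_apply, inner_sum]
      refine Finset.sum_congr rfl fun i _ => ?_
      rw [ContinuousLinearMap.sum_apply, inner_sum]
      exact Finset.sum_congr rfl fun a _ => inner_sq_norm _ (hsaM i a) ψ
  have hC : ((k : ℂ) / 2) * ((‖(∑ i, Z i) ψ‖ : ℂ) ^ 2 + (‖(∑ i, X i) ψ‖ : ℂ) ^ 2)
        + ∑ i : Fin N, ∑ a : Fin k,
            (‖(((Real.cos ((a : ℝ) * π / k) : ℝ) : ℂ) • Z i
              + ((Real.sin ((a : ℝ) * π / k) : ℝ) : ℂ) • X i - σ i a) ψ‖ : ℂ) ^ 2 = 0 :=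
    hRHS.symm.trans hLHS
  have hR : ((k : ℝ) / 2) * (‖(∑ i, Z i) ψ‖ ^ 2 + ‖(∑ i, X i) ψ‖ ^ 2)
        + ∑ i : Fin N, ∑ a : Fin k,
            ‖(((Real.cos ((a : ℝ) * π / k) : ℝ) : ℂ) • Z i
              + ((Real.sin ((a : ℝ) * π / k) : ℝ) : ℂ) • X i - σ i a) ψ‖ ^ 2 = 0 := by
    apply Complex.ofReal_injective
    rw [Complex.ofReal_add, Complex.ofReal_mul, Complex.ofReal_add, Complex.ofReal_pow,
      Complex.ofReal_pow, Complex.ofReal_sum, Complex.ofReal_zero,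
      Finset.sum_congr rfl fun i _ => Complex.ofReal_sum _ _,
      Finset.sum_congr rfl fun i (_ : i ∈ Finset.univ) =>
        Finset.sum_congr rfl fun a (_ : a ∈ Finset.univ) => Complex.ofReal_pow _ _,
      show (((k : ℝ) / 2 : ℝ) : ℂ) = (k : ℂ) / 2 by push_cast; ring]
    exact hC
  have hsum0 : ∑ i : Fin N, ∑ a : Fin k,
      ‖(((Real.cos ((a : ℝ) * π / k) : ℝ) : ℂ) • Z i
        + ((Real.sin ((a : ℝ) * π / k) : ℝ) : ℂ) • X i - σ i a) ψ‖ ^ 2 = 0 := by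
    have h1 : 0 ≤ ((k : ℝ) / 2) * (‖(∑ i, Z i) ψ‖ ^ 2 + ‖(∑ i, X i) ψ‖ ^ 2) := by positivity
    have h2 : 0 ≤ ∑ i : Fin N, ∑ a : Fin k,
        ‖(((Real.cos ((a : ℝ) * π / k) : ℝ) : ℂ) • Z i
          + ((Real.sin ((a : ℝ) * π / k) : ℝ) : ℂ) • X i - σ i a) ψ‖ ^ 2 := by positivity
    linarith
  intro i a
  have h3 := (Finset.sum_eq_zero_iff_of_nonneg
    (fun i _ => Finset.sum_nonneg fun a _ => sq_nonneg _)).mp hsum0 i (Finset.mem_univ i)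
  have h4 := (Finset.sum_eq_zero_iff_of_nonneg (fun a _ => sq_nonneg _)).mp h3 a
    (Finset.mem_univ a)
  have h5 : (((Real.cos ((a : ℝ) * π / k) : ℝ) : ℂ) • Z i
      + ((Real.sin ((a : ℝ) * π / k) : ℝ) : ℂ) • X i - σ i a) ψ = 0 :=
    norm_eq_zero.mp ((pow_eq_zero_iff two_ne_zero).mp h4)
  rw [ContinuousLinearMap.sub_apply] at h5
  exact sub_eq_zero.mp h5
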